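/- arXiv:2210.16997 — 4 statements merged into one kernel-verified Lean document; each statement's English description precedes it below -/
import Mathlib

section
/- Let θ ∈ (1/2, 1), let c > 0, and let (y_t)_{t≥T₀} be a sequence of nonnegative reals satisfying y_{t+1} ≤ y_t - c·y_t^{2θ} for all t ≥ T₀, with each y_t ∈ (0, (1/(2θc))^{1/(2θ-1)}). Suppose C₀ > 0 satisfies 1/(2θ-1) ≤ c·C₀^{2θ-1} and y_{T₀} ≤ C₀·T₀^{1/(1-2θ)}. Then y_t ≤ C₀·t^{1/(1-2θ)} for all t ≥ T₀. -/
open Real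

lemma key_ineq {β : ℝ} (h0 : 0 < β) (h1 : β < 1) :
    (1 + 2*β)/(1+β) ≤ ((1+β)/β) ^ β := by
  have hb : (0:ℝ) < (1+β)/β := by positivity
  have hc : (0:ℝ) < (1+2*β)/(1+β) := by positivity
  rw [← Real.exp_log hc, Real.rpow_def_of_pos hb]
  apply Real.exp_le_exp.2
  have h2 : Real.log ((1+2*β)/(1+β)) ≤ β/(1+β) := by
    have h := Real.log_le_sub_one_of_pos hc
    have he : (1+2*β)/(1+β) - 1 = β/(1+β) := by field_simp; ring
    linarith [he ▸ h]
  have h3 : 1/(1+β) ≤ Real.log ((1+β)/β) := by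
    have h := Real.one_sub_inv_le_log_of_pos hb
    have he : 1 - ((1+β)/β)⁻¹ = 1/(1+β) := by
      rw [inv_div]; field_simp; ring
    linarith [he ▸ h]
  calc Real.log ((1+2*β)/(1+β)) ≤ β/(1+β) := h2
    _ = (1/(1+β)) * β := by ring
    _ ≤ Real.log ((1+β)/β) * β := mul_le_mul_of_nonneg_right h3 h0.le

lemma mono_step {c p a b : ℝ} (hc : 0 < c) (hp : 1 ≤ p) (ha : 0 < a) (hab : a ≤ b)
    (hB : c * (p * b ^ (p-1)) ≤ 1) :
    a - c * a ^ p ≤ b - c * b ^ p := by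
  have hb : 0 < b := lt_of_lt_of_le ha hab
  have hs : -1 ≤ a/b - 1 := by
    have : 0 ≤ a/b := by positivity
    linarith
  have hbern := one_add_mul_self_le_rpow_one_add hs hp
  rw [show 1 + (a/b - 1) = a/b by ring, Real.div_rpow ha.le hb.le] at hbern
  have hbp : (0:ℝ) < b ^ p := Real.rpow_pos_of_pos hb p
  have hbp1 : (0:ℝ) < b ^ (p-1) := Real.rpow_pos_of_pos hb (p-1)
  have hsplit : b ^ p = b ^ (p-1) * b := by
    have h := Real.rpow_add_one hb.ne' (p-1)
    rw [show p - 1 + 1 = p by ring] at h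
    exact h
  have h1 : (1 + p*(a/b-1)) * b^p ≤ a^p := by
    calc (1 + p*(a/b-1)) * b^p ≤ (a^p/b^p) * b^p :=
          mul_le_mul_of_nonneg_right hbern hbp.le
      _ = a^p := div_mul_cancel₀ _ hbp.ne'
  have h2 : (1 + p*(a/b-1)) * b^p = b^p + p*(a-b)*b^(p-1) := by
    rw [hsplit]; field_simp
  have h3 : b^p - a^p ≤ p*(b-a)*b^(p-1) := by
    rw [h2] at h1; nlinarith [h1]
  have h4 : c*(b^p - a^p) ≤ (c*(p*b^(p-1)))*(b-a) := by
    calc c*(b^p - a^p) ≤ c*(p*(b-a)*b^(p-1)) := mul_le_mul_of_nonneg_left h3 hc.le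
      _ = (c*(p*b^(p-1)))*(b-a) := by ring
  have h5 : (c*(p*b^(p-1)))*(b-a) ≤ 1*(b-a) :=
    mul_le_mul_of_nonneg_right hB (by linarith)
  linarith

theorem stmt_4 (θ c : ℝ) (hθ : θ ∈ Set.Ioo (1/2 : ℝ) 1) (hc : 0 < c)
    (T₀ : ℕ) (hT₀ : 1 ≤ T₀) (y : ℕ → ℝ)
    (hrec : ∀ t ≥ T₀, y (t+1) ≤ y t - c * (y t) ^ (2*θ))
    (hmem : ∀ t ≥ T₀, y t ∈ Set.Ioo (0 : ℝ) ((1 / (2*θ*c)) ^ (1 / (2*θ - 1))))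
    (C₀ : ℝ) (hC₀ : 0 < C₀)
    (hC₀' : 1 / (2*θ - 1) ≤ c * C₀ ^ (2*θ - 1))
    (hinit : y T₀ ≤ C₀ * (T₀ : ℝ) ^ (1 / (1 - 2*θ))) :
    ∀ t ≥ T₀, y t ≤ C₀ * (t : ℝ) ^ (1 / (1 - 2*θ)) := by
  obtain ⟨hθ1, hθ2⟩ := hθ
  set β : ℝ := 2*θ - 1 with hβdef
  have hβ0 : 0 < β := by rw [hβdef]; linarith
  have hβ1 : β < 1 := by rw [hβdef]; linarith
  set q : ℝ := 1/β with hqdef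
  have hq0 : 0 < q := by positivity
  have hq1 : 1 ≤ q := one_le_one_div hβ0 hβ1.le
  have hβq : β * q = 1 := mul_one_div_cancel hβ0.ne'
  have hexp : 1/(1-2*θ) = -q := by
    rw [hqdef, hβdef, show (1:ℝ)-2*θ = -(2*θ-1) by ring, div_neg]
  have hp1 : (1:ℝ) ≤ 2*θ := by linarith
  have h2θ : 2*θ = β + 1 := by rw [hβdef]; ring
  set M : ℝ := (1 / (2*θ*c)) ^ (1 / (2*θ - 1)) with hMdef
  have h2θc : (0:ℝ) < 2*θ*c := by positivity
  have hM0 : 0 < M := Real.rpow_pos_of_pos (by positivity) _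
  have hMβ : M ^ β = 1/(2*θ*c) := by
    rw [hMdef, ← Real.rpow_mul (by positivity : (0:ℝ) ≤ 1/(2*θ*c)),
      show 1/(2*θ-1)*β = 1 by rw [hβdef]; field_simp; exact div_self (ne_of_gt (by linarith)), Real.rpow_one]
  intro t ht
  induction t, ht using Nat.le_induction with
  | base => exact hinit
  | succ t ht IH =>
    rw [hexp] at IH ⊢
    push_cast
    set T : ℝ := (t:ℝ) with hTdef
    have hT1 : (1:ℝ) ≤ T := by
      rw [hTdef]; exact_mod_cast le_trans hT₀ ht
    have hT0 : (0:ℝ) < T := by linarith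
    obtain ⟨hy0, hyM⟩ := hmem t ht
    have hstep := hrec t ht
    rcases le_total (C₀ * T^(-q)) M with hbM | hMb
    · -- case 1 : the bound is below M
      set b : ℝ := C₀ * T^(-q) with hbdef
      have hb0 : 0 < b := by rw [hbdef]; positivity
      have hbβ : b^β ≤ M^β := Real.rpow_le_rpow hb0.le hbM hβ0.le
      have hd : c * (2*θ * b^(2*θ-1)) ≤ 1 := by
        rw [hMβ] at hbβ
        rw [← hβdef]
        calc c*(2*θ*b^β) ≤ c*(2*θ*(1/(2*θ*c))) := by
              apply mul_le_mul_of_nonneg_left _ hc.le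
              exact mul_le_mul_of_nonneg_left hbβ (by linarith)
          _ = 1 := by field_simp
      have hmono := mono_step hc hp1 hy0 IH hd
      have hbp : b^(2*θ) = (C₀^β * C₀) * (T^(-q) * T⁻¹) := by
        rw [hbdef, Real.mul_rpow hC₀.le (Real.rpow_nonneg hT0.le _),
          ← Real.rpow_mul hT0.le, h2θ, Real.rpow_add hC₀, Real.rpow_one,
          show -q*(β+1) = -q + (-1) by linear_combination (-1:ℝ)*hβq,
          Real.rpow_add hT0, Real.rpow_neg_one]
      have hkey1 : q * b / T ≤ c * b^(2*θ) := by
        have hpos : (0:ℝ) ≤ b * T⁻¹ := by positivity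
        calc q*b/T = q*(b*T⁻¹) := by ring
          _ ≤ (c*C₀^β)*(b*T⁻¹) := mul_le_mul_of_nonneg_right hC₀' hpos
          _ = c * ((C₀^β*C₀)*(T^(-q) * T⁻¹)) := by rw [hbdef]; ring
          _ = c * b^(2*θ) := by rw [hbp]
      have hbern : 1 - q/(T+1) ≤ T^q * (T+1)^(-q) := by
        have hs : -1 ≤ -(1/(T+1)) := by
          have h1 : 1/(T+1) ≤ 1 := by
            rw [div_le_one (by linarith)]; linarith
          linarith
        have h := one_add_mul_self_le_rpow_one_add hs hq1
        rw [show 1 + -(1/(T+1)) = T/(T+1) by field_simp; ring,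
          Real.div_rpow hT0.le (by linarith)] at h
        calc 1 - q/(T+1) = 1 + q * -(1/(T+1)) := by ring
          _ ≤ T^q/(T+1)^q := h
          _ = T^q * (T+1)^(-q) := by
              rw [Real.rpow_neg (by linarith), div_eq_mul_inv]
      have hfin1 : b * (1 - q/T) ≤ C₀ * (T+1)^(-q) := by
        have hq2 : q/(T+1) ≤ q/T := by gcongr; linarith
        have hTq : (0:ℝ) < T^(-q) := Real.rpow_pos_of_pos hT0 _
        have h2 : (1 - q/(T+1)) * T^(-q) ≤ (T+1)^(-q) := by
          have h := mul_le_mul_of_nonneg_right hbern hTq.le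
          have he : T^q * (T+1)^(-q) * T^(-q) = (T+1)^(-q) := by
            rw [show T^q * (T+1)^(-q) * T^(-q) = (T+1)^(-q) * (T^q * T^(-q)) by ring,
              ← Real.rpow_add hT0, add_neg_cancel, Real.rpow_zero, mul_one]
          rw [he] at h
          exact h
        calc b*(1-q/T) = C₀ * ((1-q/T) * T^(-q)) := by rw [hbdef]; ring
          _ ≤ C₀ * ((1-q/(T+1)) * T^(-q)) := by
              apply mul_le_mul_of_nonneg_left _ hC₀.le
              apply mul_le_mul_of_nonneg_right _ hTq.le
              linarith
          _ ≤ C₀ * (T+1)^(-q) := mul_le_mul_of_nonneg_left h2 hC₀.le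
      have hb1 : b*(1-q/T) = b - q*b/T := by ring
      linarith
    · -- case 2 : M is below the bound
      have hdM : c*(2*θ*M^(2*θ-1)) ≤ 1 := by
        rw [← hβdef, hMβ]
        have : c*(2*θ*(1/(2*θ*c))) = 1 := by field_simp
        linarith [this]
      have hmono := mono_step hc hp1 hy0 hyM.le hdM
      have hMp : c * M^(2*θ) = M/(2*θ) := by
        rw [h2θ, Real.rpow_add_one hM0.ne', hMβ, h2θ]
        field_simp
      have hKM : (C₀/M)^β = C₀^β*(2*θ*c) := by
        rw [Real.div_rpow hC₀.le hM0.le, hMβ, one_div, div_eq_mul_inv, inv_inv]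
      set K : ℝ := C₀^β*(2*θ*c) with hKdef
      have hK0 : 0 < K := by rw [hKdef]; positivity
      have hCM0 : (0:ℝ) < C₀/M := by positivity
      have hKq : K^q = C₀/M := by
        rw [← hKM, ← Real.rpow_mul hCM0.le, hβq, Real.rpow_one]
      have hKlb : (1+β)/β ≤ K := by
        have hKe : K = (β+1)*(c*C₀^β) := by rw [hKdef, h2θ]; ring
        rw [hKe]
        calc (1+β)/β = (β+1)*(1/β) := by ring
          _ ≤ (β+1)*(c*C₀^β) := mul_le_mul_of_nonneg_left hC₀' (by linarith)
      have hTK : T ≤ K := by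
        have h1 : M * T^q ≤ C₀ := by
          have h := mul_le_mul_of_nonneg_right hMb (Real.rpow_pos_of_pos hT0 q).le
          rw [show C₀*T^(-q)*T^q = C₀*(T^(-q)*T^q) by ring,
            ← Real.rpow_add hT0, neg_add_cancel, Real.rpow_zero, mul_one] at h
          linarith
        have h2 : T^q ≤ C₀/M := by
          rw [le_div_iff₀ hM0]; linarith
        have h3 : (T^q)^β ≤ (C₀/M)^β :=
          Real.rpow_le_rpow (Real.rpow_nonneg hT0.le _) h2 hβ0.le
        rw [← Real.rpow_mul hT0.le, show q*β = 1 by linarith [hβq],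
          Real.rpow_one, hKM] at h3
        exact h3
      have hT1K : T + 1 ≤ K * ((1+β)/β)^β := by
        have hki := key_ineq hβ0 hβ1
        have h1 : K * ((1+2*β)/(1+β)) ≤ K * ((1+β)/β)^β :=
          mul_le_mul_of_nonneg_left hki hK0.le
        have hKβ : 1 + β ≤ K*β := by
          have h := mul_le_mul_of_nonneg_right hKlb hβ0.le
          rw [div_mul_cancel₀ _ hβ0.ne'] at h
          linarith
        have h2 : K + 1 ≤ K * ((1+2*β)/(1+β)) := by
          have he : K * ((1+2*β)/(1+β)) - (K+1) = (K*β - (1+β))/(1+β) := by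
            field_simp
            ring
          have hnn : (0:ℝ) ≤ (K*β - (1+β))/(1+β) :=
            div_nonneg (by linarith) (by linarith)
          linarith
        linarith
      have hfin : M - c*M^(2*θ) ≤ C₀*(T+1)^(-q) := by
        have hR0 : (0:ℝ) < (1+β)/β := by positivity
        have hX0 : 0 < K * ((1+β)/β)^β := by positivity
        have h1 : (K * ((1+β)/β)^β)^(-q) ≤ (T+1)^(-q) :=
          Real.rpow_le_rpow_of_nonpos (by linarith) hT1K (by linarith)
        have hXq : (K * ((1+β)/β)^β)^q = (C₀/M) * ((1+β)/β) := by
          rw [Real.mul_rpow hK0.le (Real.rpow_nonneg hR0.le _), hKq,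
            ← Real.rpow_mul hR0.le, hβq, Real.rpow_one]
        have h2 : (K * ((1+β)/β)^β)^(-q) = M*β/(C₀*(1+β)) := by
          rw [Real.rpow_neg hX0.le, hXq]
          rw [mul_inv, inv_div, inv_div]
          field_simp
        have h3 : M - c*M^(2*θ) = M*β/(1+β) := by
          rw [hMp, h2θ]
          field_simp
          ring
        have h4 : C₀ * (M*β/(C₀*(1+β))) = M*β/(1+β) := by
          field_simp
        rw [h3]
        calc M*β/(1+β) = C₀*(M*β/(C₀*(1+β))) := h4.symm
          _ = C₀*((K * ((1+β)/β)^β)^(-q)) := by rw [h2]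
          _ ≤ C₀*(T+1)^(-q) := mul_le_mul_of_nonneg_left h1 hC₀.le
      linarith
end

section
/- Let (y_t) be nonnegative reals with y_{t+1} ≤ y_t + β_t·y_t^{2θ} + C·δ_t where θ ∈ (1/2, 1), β_t := b + c·δ_t with b < 0, c > 0, δ_t = 2^{-t}, and C > 0. Suppose T₀ and C₀ > 1 are such that: (a) y_t ∈ (0, (1/(-2θβ_t))^{1/(2θ-1)}) for t ≥ T₀; (b) C₀/(2θ-1)·t^{2θ/(1-2θ)} + C₀^{2θ}·β_t·t^{2θ/(1-2θ)} + C·δ_t ≤ 0 for t ≥ T₀; (c) y_{T₀} ≤ C₀·T₀^{1/(1-2θ)}. Then y_t ≤ C₀·t^{1/(1-2θ)} for all t ≥ T₀. -/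
open Real Set

/-- Bernoulli-type inequality for exponents `≤ -1`. -/
lemma bern_neg {pp x : ℝ} (hp : pp ≤ -1) (hx : 0 < x) :
    x ^ pp + pp * x ^ (pp - 1) ≤ (x + 1) ^ pp := by
  have hx1 : (0 : ℝ) < x + 1 := by linarith
  have hs : (-1 : ℝ) ≤ -1 / (x + 1) := by
    rw [neg_div, neg_le_neg_iff]
    rw [div_le_one hx1]; linarith
  have hber := one_add_mul_self_le_rpow_one_add hs (p := -pp) (by linarith)
  have hbase : (1 : ℝ) + -1 / (x + 1) = x / (x + 1) := by field_simp; ring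
  rw [hbase] at hber
  -- hber : 1 + -pp * (-1/(x+1)) ≤ (x/(x+1)) ^ (-pp)
  have hxx1 : (0:ℝ) < x / (x + 1) := by positivity
  have hflip : (x / (x+1)) ^ (-pp) = ((x+1)/x) ^ pp := by
    rw [Real.rpow_neg hxx1.le, ← Real.inv_rpow hxx1.le, inv_div]
  rw [hflip] at hber
  -- hber : 1 + -pp * (-1/(x+1)) ≤ ((x+1)/x) ^ pp
  have h2 : 1 + pp / x ≤ ((x+1)/x) ^ pp := by
    refine le_trans ?_ hber
    have h3 : pp / x ≤ pp / (x+1) := by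
      rw [div_le_div_iff₀ hx hx1]; nlinarith
    have : -pp * (-1/(x+1)) = pp / (x+1) := by ring
    linarith [this ▸ h3]
  have hxp : (0:ℝ) < x ^ pp := Real.rpow_pos_of_pos hx _
  have hmul := mul_le_mul_of_nonneg_left h2 hxp.le
  have hxpp : x ^ pp * ((x+1)/x) ^ pp = (x+1) ^ pp := by
    rw [← Real.mul_rpow hx.le (by positivity)]
    rw [mul_div_cancel₀ _ hx.ne']
  have hxm1 : x ^ pp * (pp / x) = pp * x ^ (pp - 1) := by
    rw [Real.rpow_sub hx, Real.rpow_one]; ring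
  calc x ^ pp + pp * x ^ (pp-1) = x ^ pp * (1 + pp / x) := by rw [mul_add, mul_one, hxm1]
    _ ≤ x ^ pp * ((x+1)/x) ^ pp := hmul
    _ = (x+1) ^ pp := hxpp

/-- `a*w + bb*w^r` is convex on `[lo,hi]` when `r < 0`, `0 < lo`, `0 ≤ bb`. -/
lemma convexOn_aux {r a bb lo hi : ℝ} (hr : r < 0) (hlo : 0 < lo) (hbb : 0 ≤ bb) :
    ConvexOn ℝ (Icc lo hi) (fun w : ℝ => a * w + bb * w ^ r) := by
  have hd : ∀ w : ℝ, w ≠ 0 →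
      HasDerivAt (fun w : ℝ => a * w + bb * w ^ r) (a + bb * (r * w ^ (r-1))) w := by
    intro w hw0
    have h1 := ((hasDerivAt_id w).const_mul a).add
      ((Real.hasDerivAt_rpow_const (x := w) (p := r) (Or.inl hw0)).const_mul bb)
    exact h1.congr_deriv (by ring)
  refine convexOn_of_hasDerivWithinAt2_nonneg (convex_Icc lo hi)
    (f' := fun w => a + bb * (r * w ^ (r-1)))
    (f'' := fun w => bb * (r * ((r-1) * w ^ (r-2)))) ?_ ?_ ?_ ?_
  · intro w hw
    exact (hd w (lt_of_lt_of_le hlo hw.1).ne').continuousAt.continuousWithinAt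
  · intro w hw
    rw [interior_Icc] at hw
    exact (hd w (lt_of_lt_of_le hlo hw.1.le).ne').hasDerivWithinAt
  · intro w hw
    rw [interior_Icc] at hw
    have hw0 : w ≠ 0 := (lt_of_lt_of_le hlo hw.1.le).ne'
    have h2 := (((Real.hasDerivAt_rpow_const (x := w) (p := r-1)
      (Or.inl hw0)).const_mul r).const_mul bb).const_add a
    rw [show r - 1 - 1 = r - 2 by ring] at h2
    exact h2.hasDerivWithinAt
  · intro w hw
    rw [interior_Icc] at hw
    have hwpos : 0 < w := lt_of_lt_of_le hlo hw.1.le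
    have h2 : 0 < w ^ (r-2) := Real.rpow_pos_of_pos hwpos _
    show 0 ≤ bb * (r * ((r-1) * w ^ (r-2)))
    have h3 : 0 ≤ r * (r-1) := by nlinarith
    have h4 : 0 ≤ r * ((r-1) * w ^ (r-2)) := by nlinarith
    exact mul_nonneg hbb h4

/-- Monotonicity of `z ↦ z + βt * z^s` on `[0, M]`. -/
lemma mono_g {s βt M : ℝ} (hs : 1 ≤ s) (hM : 0 ≤ M)
    (hMs : ∀ z ∈ Set.Ioo 0 M, 0 ≤ 1 + βt * (s * z ^ (s-1))) :
    MonotoneOn (fun z : ℝ => z + βt * z ^ s) (Icc 0 M) := by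
  refine monotoneOn_of_hasDerivWithinAt_nonneg (convex_Icc 0 M)
    (f' := fun z => 1 + βt * (s * z ^ (s-1))) ?_ ?_ ?_
  · intro z hz
    have h1 : HasDerivAt (fun z : ℝ => z + βt * z ^ s) (1 + βt * (s * z ^ (s-1))) z :=
      (hasDerivAt_id z).add ((Real.hasDerivAt_rpow_const (x := z) (p := s) (Or.inr hs)).const_mul βt)
    exact h1.continuousAt.continuousWithinAt
  · intro z hz
    exact ((hasDerivAt_id z).add
      ((Real.hasDerivAt_rpow_const (x := z) (p := s) (Or.inr hs)).const_mul βt)).hasDerivWithinAt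
  · intro z hz
    rw [interior_Icc] at hz
    exact hMs z hz

set_option maxHeartbeats 1000000 in
theorem stmt_10 (θ b c C : ℝ) (hθ : θ ∈ Set.Ioo (1/2 : ℝ) 1)
    (hb : b < 0) (hc : 0 < c) (hC : 0 < C)
    (δ : ℕ → ℝ) (hδ : ∀ t, δ t = (2 : ℝ)⁻¹ ^ t)
    (β : ℕ → ℝ) (hβ : ∀ t, β t = b + c * δ t)
    (y : ℕ → ℝ) (hy : ∀ t, 0 ≤ y t)
    (hrec : ∀ t, y (t+1) ≤ y t + β t * (y t) ^ (2*θ) + C * δ t)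
    (T₀ : ℕ) (hT₀ : 1 ≤ T₀) (C₀ : ℝ) (hC₀ : 1 < C₀)
    (ha : ∀ t ≥ T₀, y t ∈ Set.Ioo (0 : ℝ) ((1 / (-(2*θ) * β t)) ^ (1 / (2*θ - 1))))
    (hb' : ∀ t ≥ T₀, C₀ / (2*θ - 1) * (t : ℝ) ^ (2*θ / (1 - 2*θ))
            + C₀ ^ (2*θ) * β t * (t : ℝ) ^ (2*θ / (1 - 2*θ)) + C * δ t ≤ 0)
    (hinit : y T₀ ≤ C₀ * (T₀ : ℝ) ^ (1 / (1 - 2*θ))) :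
    ∀ t ≥ T₀, y t ≤ C₀ * (t : ℝ) ^ (1 / (1 - 2*θ)) := by
  obtain ⟨hθ1, hθ2⟩ := hθ
  have hε : (0:ℝ) < 2*θ - 1 := by linarith
  have hεne : (2*θ - 1 : ℝ) ≠ 0 := hε.ne'
  have h1m : ((1:ℝ) - 2*θ) ≠ 0 := by intro h; nlinarith
  have hθ0 : (0:ℝ) < 2*θ := by linarith
  have hC₀pos : (0:ℝ) < C₀ := by linarith
  have hP : 1/(1-2*θ) = -(1/(2*θ-1)) := by
    rw [show (1:ℝ)-2*θ = -(2*θ-1) by ring, div_neg]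
  have hPle : 1/(1-2*θ) ≤ -1 := by
    have h1 : (1:ℝ) ≤ 1/(2*θ-1) := by
      rw [le_div_iff₀ hε]; linarith
    rw [hP]; linarith
  have hQ : 2*θ/(1-2*θ) = 1/(1-2*θ) - 1 := by
    field_simp; ring
  have hδpos : ∀ n, 0 < δ n := fun n => by rw [hδ]; positivity
  have hβneg : ∀ u, T₀ ≤ u → β u < 0 := by
    intro u hu
    by_contra h0
    push_neg at h0
    have h := hb' u hu
    have hupos : (0:ℝ) < (u:ℝ) := by
      have : 1 ≤ u := le_trans hT₀ hu
      exact_mod_cast Nat.lt_of_lt_of_le Nat.zero_lt_one this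
    have hq1 : (0:ℝ) < (u:ℝ) ^ (2*θ/(1-2*θ)) := Real.rpow_pos_of_pos hupos _
    have h1 : (0:ℝ) < C₀/(2*θ-1) * (u:ℝ) ^ (2*θ/(1-2*θ)) := by positivity
    have h2 : (0:ℝ) ≤ C₀^(2*θ) * β u * (u:ℝ) ^ (2*θ/(1-2*θ)) :=
      mul_nonneg (mul_nonneg (Real.rpow_pos_of_pos hC₀pos _).le h0) hq1.le
    have h3 : (0:ℝ) < C * δ u := mul_pos hC (hδpos u)
    linarith
  have hβmono : ∀ u : ℕ, β (u+1) ≤ β u := by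
    intro u
    have h1 : δ (u+1) ≤ δ u := by
      rw [hδ, hδ]
      exact pow_le_pow_of_le_one (by norm_num) (by norm_num) (Nat.le_succ u)
    rw [hβ, hβ]
    nlinarith [mul_le_mul_of_nonneg_left h1 hc.le]
  intro t ht
  induction t, ht using Nat.le_induction with
  | base => exact hinit
  | succ t ht IH =>
    push_cast
    -- goal : y (t+1) ≤ C₀ * ((t:ℝ)+1) ^ (1/(1-2θ))
    have htpos : (0:ℝ) < (t:ℝ) := by
      have : 1 ≤ t := le_trans hT₀ ht
      exact_mod_cast Nat.lt_of_lt_of_le Nat.zero_lt_one this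
    have ht1 : T₀ ≤ t + 1 := le_trans ht (Nat.le_succ t)
    have hβt : β t < 0 := hβneg t ht
    have hβt1 : β (t+1) < 0 := hβneg (t+1) ht1
    have hbase_t : (0:ℝ) < -(2*θ) * β t := by nlinarith
    have hbase_t1 : (0:ℝ) < -(2*θ) * β (t+1) := by nlinarith
    have hZtpos : (0:ℝ) < (1 / (-(2*θ) * β t)) ^ (1/(2*θ-1)) :=
      Real.rpow_pos_of_pos (by positivity) _
    have hZtE : ((1 / (-(2*θ) * β t)) ^ (1/(2*θ-1))) ^ (2*θ-1) = 1 / (-(2*θ) * β t) := by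
      rw [← Real.rpow_mul (by positivity), one_div_mul_cancel hεne, Real.rpow_one]
    have hZmono : (1 / (-(2*θ) * β (t+1))) ^ (1/(2*θ-1))
        ≤ (1 / (-(2*θ) * β t)) ^ (1/(2*θ-1)) := by
      have h1 : -(2*θ) * β t ≤ -(2*θ) * β (t+1) := by nlinarith [hβmono t]
      have h2 : 1 / (-(2*θ)*β (t+1)) ≤ 1 / (-(2*θ)*β t) :=
        one_div_le_one_div_of_le hbase_t h1
      exact Real.rpow_le_rpow (by positivity) h2 (one_div_nonneg.mpr hε.le)
    have hyt := ha t ht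
    have hyt1 := ha (t+1) ht1
    have hTay : (t:ℝ) ^ (1/(1-2*θ)) + (1/(1-2*θ)) * (t:ℝ) ^ (1/(1-2*θ) - 1)
        ≤ ((t:ℝ)+1) ^ (1/(1-2*θ)) := bern_neg hPle htpos
    have hb't := hb' t ht
    rw [hQ] at hb't
    have hApos : (0:ℝ) < C₀ * (t:ℝ) ^ (1/(1-2*θ)) := by positivity
    have hA1pos : (0:ℝ) < C₀ * ((t:ℝ)+1) ^ (1/(1-2*θ)) := by positivity
    -- monotonicity of z ↦ z + β t z^(2θ) on [0, Z t]
    have hmonog : MonotoneOn (fun z : ℝ => z + β t * z ^ (2*θ))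
        (Icc 0 ((1 / (-(2*θ) * β t)) ^ (1/(2*θ-1)))) := by
      apply mono_g (by linarith) hZtpos.le
      intro z hz
      have hz1 : z ^ (2*θ-1) ≤ ((1 / (-(2*θ) * β t)) ^ (1/(2*θ-1))) ^ (2*θ-1) :=
        Real.rpow_le_rpow hz.1.le hz.2.le (by linarith)
      rw [hZtE] at hz1
      have h4 := mul_le_mul_of_nonneg_left hz1 hbase_t.le
      rw [mul_one_div, div_self hbase_t.ne'] at h4
      nlinarith [h4]
    by_cases hcase1 : (1 / (-(2*θ) * β (t+1))) ^ (1/(2*θ-1)) ≤ C₀ * ((t:ℝ)+1) ^ (1/(1-2*θ))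
    · exact le_trans hyt1.2.le hcase1
    · push_neg at hcase1
      by_cases hcase2 : C₀ * (t:ℝ) ^ (1/(1-2*θ)) ≤ (1 / (-(2*θ) * β t)) ^ (1/(2*θ-1))
      · -- subcase A : apply monotonicity up to C₀ t^P
        have hgy := hmonog (a := y t) (b := C₀ * (t:ℝ) ^ (1/(1-2*θ)))
          ⟨hy t, hyt.2.le⟩ ⟨hApos.le, hcase2⟩ IH
        simp only [] at hgy
        have hK1 : C₀ * (t:ℝ) ^ (1/(1-2*θ))
            + β t * (C₀ * (t:ℝ) ^ (1/(1-2*θ))) ^ (2*θ) + C * δ t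
            ≤ C₀ * ((t:ℝ)+1) ^ (1/(1-2*θ)) := by
          have hA2θ : (C₀ * (t:ℝ) ^ (1/(1-2*θ))) ^ (2*θ)
              = C₀^(2*θ) * (t:ℝ) ^ (1/(1-2*θ) - 1) := by
            rw [Real.mul_rpow hC₀pos.le (Real.rpow_pos_of_pos htpos _).le,
                ← Real.rpow_mul htpos.le,
                show (1/(1-2*θ))*(2*θ) = 1/(1-2*θ)-1 from by rw [← hQ]; ring]
          rw [hA2θ]
          have hTm := mul_le_mul_of_nonneg_left hTay hC₀pos.le
          have hbr : C₀ * ((1/(1-2*θ)) * (t:ℝ) ^ (1/(1-2*θ)-1))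
              = -(C₀/(2*θ-1) * (t:ℝ) ^ (1/(1-2*θ)-1)) := by rw [hP]; ring
          linarith [hTm, hbr, hb't]
        calc y (t+1) ≤ y t + β t * (y t) ^ (2*θ) + C * δ t := hrec t
          _ ≤ C₀ * (t:ℝ) ^ (1/(1-2*θ))
              + β t * (C₀ * (t:ℝ) ^ (1/(1-2*θ))) ^ (2*θ) + C * δ t := by linarith
          _ ≤ C₀ * ((t:ℝ)+1) ^ (1/(1-2*θ)) := hK1
      · -- subcase B : Z t < C₀ t^P
        push_neg at hcase2
        have hθne : (2*θ) ≠ 0 := by positivity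
        have hw12 : C₀ * ((t:ℝ)+1) ^ (1/(1-2*θ)) ≤ C₀ * (t:ℝ) ^ (1/(1-2*θ)) :=
          le_of_lt (lt_trans (lt_of_lt_of_le hcase1 hZmono) hcase2)
        have hZmem : (1 / (-(2*θ) * β t)) ^ (1/(2*θ-1)) ∈
            Icc (C₀ * ((t:ℝ)+1) ^ (1/(1-2*θ))) (C₀ * (t:ℝ) ^ (1/(1-2*θ))) :=
          ⟨(lt_of_lt_of_le hcase1 hZmono).le, hcase2.le⟩
        have hgZ := hmonog (a := y t) (b := (1 / (-(2*θ) * β t)) ^ (1/(2*θ-1)))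
          ⟨hy t, hyt.2.le⟩ ⟨hZtpos.le, le_rfl⟩ hyt.2.le
        simp only [] at hgZ
        have hZs : ((1 / (-(2*θ) * β t)) ^ (1/(2*θ-1))) ^ (2*θ)
            = (1 / (-(2*θ) * β t)) ^ (1/(2*θ-1))
              * ((1 / (-(2*θ) * β t)) ^ (1/(2*θ-1))) ^ (2*θ-1) := by
          have h0 := Real.rpow_add hZtpos 1 (2*θ-1)
          rw [Real.rpow_one, show (1:ℝ) + (2*θ-1) = 2*θ by ring] at h0
          exact h0
        rw [hZs] at hgZ
        have hZneg : ((1 / (-(2*θ) * β t)) ^ (1/(2*θ-1))) ^ (1-2*θ)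
            = (((1 / (-(2*θ) * β t)) ^ (1/(2*θ-1))) ^ (2*θ-1))⁻¹ := by
          rw [show (1-2*θ) = -(2*θ-1) by ring, Real.rpow_neg hZtpos.le]
        have hWmul : (-(2*θ) * β t) * ((1 / (-(2*θ) * β t)) ^ (1/(2*θ-1))) ^ (2*θ-1) = 1 := by
          rw [hZtE]
          exact mul_one_div_cancel hbase_t.ne'
        have hWpos : 0 < ((1 / (-(2*θ) * β t)) ^ (1/(2*θ-1))) ^ (2*θ-1) :=
          Real.rpow_pos_of_pos hZtpos _
        -- convexity bound on φ
        have hconv := convexOn_aux (r := 1-2*θ) (a := 1 - 1/(2*θ))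
            (bb := C₀^(2*θ) * (t:ℝ)^(1/(1-2*θ)-1) / (2*θ))
            (lo := C₀ * ((t:ℝ)+1) ^ (1/(1-2*θ))) (hi := C₀ * (t:ℝ) ^ (1/(1-2*θ)))
            (by linarith) hA1pos (by positivity)
        have hmax := hconv.le_on_segment (left_mem_Icc.mpr hw12) (right_mem_Icc.mpr hw12)
          (by rw [segment_eq_Icc hw12]; exact hZmem)
        -- replace the rpow atoms by opaque variables
        generalize hZg : (1 / (-(2*θ) * β t)) ^ (1/(2*θ-1)) = Z at hgZ hmax hZneg hWmul hWpos hZtpos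
        generalize hVg : Z ^ (1-2*θ) = V at hmax hZneg
        generalize hWg : Z ^ (2*θ-1) = W at hgZ hZneg hWmul hWpos
        -- hZneg : V = W⁻¹ ; hWmul : (-(2θ) βt) W = 1
        have hWne : W ≠ 0 := hWpos.ne'
        have hβV : β t = -(V/(2*θ)) := by
          rw [hZneg]
          field_simp
          linear_combination -hWmul
        have hgval : Z + β t * (Z * W) = (1 - 1/(2*θ)) * Z := by
          rw [hβV, hZneg]
          field_simp
          ring
        have hCδ : C * δ t ≤ C₀^(2*θ) * (t:ℝ)^(1/(1-2*θ)-1) / (2*θ) * V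
            - C₀/(2*θ-1) * (t:ℝ)^(1/(1-2*θ)-1) := by
          have h1 : C₀^(2*θ) * β t * (t:ℝ)^(1/(1-2*θ)-1)
              = -(C₀^(2*θ) * (t:ℝ)^(1/(1-2*θ)-1) / (2*θ) * V) := by
            rw [hβV]; ring
          linarith [hb't, h1]
        -- endpoint computations
        have hrw2 : (C₀ * (t:ℝ) ^ (1/(1-2*θ))) ^ (1-2*θ) = C₀^(1-2*θ) * (t:ℝ) := by
          rw [Real.mul_rpow hC₀pos.le (Real.rpow_pos_of_pos htpos _).le,
              ← Real.rpow_mul htpos.le, one_div_mul_cancel h1m, Real.rpow_one]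
        have hrw1 : (C₀ * ((t:ℝ)+1) ^ (1/(1-2*θ))) ^ (1-2*θ) = C₀^(1-2*θ) * ((t:ℝ)+1) := by
          rw [Real.mul_rpow hC₀pos.le (Real.rpow_pos_of_pos (by linarith) _).le,
              ← Real.rpow_mul (by linarith : (0:ℝ) ≤ (t:ℝ)+1), one_div_mul_cancel h1m,
              Real.rpow_one]
        have hCC : C₀^(2*θ) * C₀^(1-2*θ) = C₀ := by
          rw [← Real.rpow_add hC₀pos, show 2*θ+(1-2*θ) = (1:ℝ) by ring, Real.rpow_one]
        have hEA : (t:ℝ) ^ (1/(1-2*θ)) = (t:ℝ) ^ (1/(1-2*θ)-1) * (t:ℝ) := by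
          have h0 := Real.rpow_add_one htpos.ne' (1/(1-2*θ)-1)
          rw [show 1/(1-2*θ)-1+1 = 1/(1-2*θ) by ring] at h0
          exact h0
        have hTm := mul_le_mul_of_nonneg_left hTay hC₀pos.le
        have hbr : C₀ * ((1/(1-2*θ)) * (t:ℝ) ^ (1/(1-2*θ)-1))
            = -(C₀/(2*θ-1) * (t:ℝ) ^ (1/(1-2*θ)-1)) := by rw [hP]; ring
        have hend2 : (1 - 1/(2*θ)) * (C₀ * (t:ℝ) ^ (1/(1-2*θ)))
            + C₀^(2*θ) * (t:ℝ)^(1/(1-2*θ)-1) / (2*θ) * (C₀ * (t:ℝ) ^ (1/(1-2*θ))) ^ (1-2*θ)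
            ≤ C₀ * ((t:ℝ)+1) ^ (1/(1-2*θ)) + C₀/(2*θ-1) * (t:ℝ)^(1/(1-2*θ)-1) := by
          rw [hrw2]
          have hval : (1 - 1/(2*θ)) * (C₀ * (t:ℝ) ^ (1/(1-2*θ)))
              + C₀^(2*θ) * (t:ℝ)^(1/(1-2*θ)-1) / (2*θ) * (C₀^(1-2*θ) * (t:ℝ))
              = C₀ * (t:ℝ) ^ (1/(1-2*θ)) := by
            rw [hEA]
            generalize (t:ℝ)^(1/(1-2*θ)-1) = e
            field_simp
            linear_combination e * hCC
          rw [hval]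
          linarith [hTm, hbr]
        have hend1 : (1 - 1/(2*θ)) * (C₀ * ((t:ℝ)+1) ^ (1/(1-2*θ)))
            + C₀^(2*θ) * (t:ℝ)^(1/(1-2*θ)-1) / (2*θ) * (C₀ * ((t:ℝ)+1) ^ (1/(1-2*θ))) ^ (1-2*θ)
            ≤ C₀ * ((t:ℝ)+1) ^ (1/(1-2*θ)) + C₀/(2*θ-1) * (t:ℝ)^(1/(1-2*θ)-1) := by
          rw [hrw1]
          have hval : C₀^(2*θ) * (t:ℝ)^(1/(1-2*θ)-1) / (2*θ) * (C₀^(1-2*θ) * ((t:ℝ)+1))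
              = C₀ * ((t:ℝ)^(1/(1-2*θ)) + (t:ℝ)^(1/(1-2*θ)-1)) / (2*θ) := by
            rw [hEA]
            generalize (t:ℝ)^(1/(1-2*θ)-1) = e
            field_simp
            linear_combination e * hCC
          rw [hval]
          have hTm2 := mul_le_mul_of_nonneg_left hTay
            (le_of_lt (by positivity : (0:ℝ) < C₀/(2*θ)))
          have hbr2 : C₀/(2*θ) * ((1/(1-2*θ)) * (t:ℝ)^(1/(1-2*θ)-1))
              = C₀/(2*θ) * (t:ℝ)^(1/(1-2*θ)-1) - C₀/(2*θ-1) * (t:ℝ)^(1/(1-2*θ)-1) := by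
            rw [hP]
            generalize (t:ℝ)^(1/(1-2*θ)-1) = e
            field_simp
            ring
          have h3 : C₀/(2*θ) * (t:ℝ)^(1/(1-2*θ)) + C₀/(2*θ) * (t:ℝ)^(1/(1-2*θ)-1)
              - C₀/(2*θ-1) * (t:ℝ)^(1/(1-2*θ)-1) ≤ C₀/(2*θ) * ((t:ℝ)+1)^(1/(1-2*θ)) := by
            linarith [hTm2, hbr2]
          have h4 : C₀ * ((t:ℝ)^(1/(1-2*θ)) + (t:ℝ)^(1/(1-2*θ)-1)) / (2*θ)
              = C₀/(2*θ) * (t:ℝ)^(1/(1-2*θ)) + C₀/(2*θ) * (t:ℝ)^(1/(1-2*θ)-1) := by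
            ring
          have h5 : (1 - 1/(2*θ)) * (C₀ * ((t:ℝ)+1) ^ (1/(1-2*θ)))
              = C₀ * ((t:ℝ)+1) ^ (1/(1-2*θ)) - C₀/(2*θ) * ((t:ℝ)+1)^(1/(1-2*θ)) := by
            ring
          linarith [h3, h4, h5]
        have hm := max_le hend1 hend2
        linarith [hrec t, hgZ, hgval, hCδ, hmax, hm]
end

section
/- Let θ ∈ (1/2, 1), η > 0, and let (y_t)_{t≥T₀} be nonnegative reals and (w_t) nonnegative reals satisfying y_t ≥ y_{t+1} + η·y_{t+1}^{2θ} - w_t for all t ≥ T₀. Suppose C₀ > 0 and T₀ satisfy: (a) y_{T₀} ≤ C₀·T₀^{1/(1-2θ)}; (b) (C₀/(2θ-1))·t^{2θ/(1-2θ)} + w_t ≤ η·C₀^{2θ}·(t+1)^{2θ/(1-2θ)} for all t ≥ T₀. Then y_t ≤ C₀·t^{1/(1-2θ)} for all t ≥ T₀. -/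
/-- Bernoulli's inequality for exponents `p ≤ -1` and `s > 0`. -/
lemma bernoulli_neg {s p : ℝ} (hs : 0 < s) (hp : p ≤ -1) :
    1 + p * s ≤ (1 + s) ^ p := by
  have hs1 : (0:ℝ) < 1 + s := by linarith
  have hs' : -1 ≤ -s / (1 + s) := by
    rw [neg_div, neg_le_neg_iff, div_le_one hs1]; linarith
  have hb := one_add_mul_self_le_rpow_one_add hs' (p := -p) (by linarith)
  have heq : 1 + -s / (1 + s) = (1 + s)⁻¹ := by field_simp; ring
  rw [heq] at hb
  have hinv : ((1 + s)⁻¹ : ℝ) ^ (-p) = (1 + s) ^ p := by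
    rw [← Real.rpow_neg_one (1 + s), ← Real.rpow_mul hs1.le]
    congr 1; ring
  rw [hinv] at hb
  refine le_trans ?_ hb
  have h1 : s / (1 + s) ≤ s := by
    rw [div_le_iff₀ hs1]; nlinarith
  have h2 : p * s ≤ p * (s / (1 + s)) := by
    have := mul_le_mul_of_nonpos_left h1 (by linarith : p ≤ 0)
    linarith
  have : -p * (-s / (1 + s)) = p * (s / (1 + s)) := by ring
  linarith [this ▸ h2]

theorem stmt_14 (θ η : ℝ) (hθ : θ ∈ Set.Ioo (1/2 : ℝ) 1) (hη : 0 < η)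
    (T₀ : ℕ) (hT₀ : 1 ≤ T₀) (y w : ℕ → ℝ)
    (hy : ∀ t ≥ T₀, 0 ≤ y t) (hw : ∀ t, 0 ≤ w t)
    (hrec : ∀ t ≥ T₀, y t ≥ y (t+1) + η * (y (t+1)) ^ (2*θ) - w t)
    (C₀ : ℝ) (hC₀ : 0 < C₀)
    (hinit : y T₀ ≤ C₀ * (T₀ : ℝ) ^ (1 / (1 - 2*θ)))
    (hcond : ∀ t ≥ T₀, (C₀ / (2*θ - 1)) * (t : ℝ) ^ (2*θ / (1 - 2*θ)) + w t
              ≤ η * C₀ ^ (2*θ) * ((t : ℝ) + 1) ^ (2*θ / (1 - 2*θ))) :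
    ∀ t ≥ T₀, y t ≤ C₀ * (t : ℝ) ^ (1 / (1 - 2*θ)) := by
  obtain ⟨hθ1, hθ2⟩ := hθ
  have h2θ : 1 < 2 * θ := by linarith
  have hd : 1 - 2 * θ < 0 := by linarith
  set α : ℝ := 1 / (1 - 2 * θ) with hαdef
  have hα : α < 0 := div_neg_of_pos_of_neg one_pos hd
  have hdne : (1 - 2 * θ) ≠ 0 := ne_of_lt hd
  have hdne' : (2 * θ - 1) ≠ 0 := by intro h; apply hdne; linarith
  have hαle : α ≤ -1 := by
    rw [hαdef, div_le_iff_of_neg hd]; nlinarith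
  have hα1 : α - 1 = 2 * θ / (1 - 2 * θ) := by
    rw [hαdef]; field_simp; ring
  have hα2 : α * (2 * θ) = 2 * θ / (1 - 2 * θ) := by
    rw [hαdef]; field_simp
  have hnegα : C₀ / (2 * θ - 1) = C₀ * (-α) := by
    rw [hαdef]; field_simp; ring
  intro t ht
  induction t, ht using Nat.le_induction with
  | base => exact hinit
  | succ n hn ih =>
    have hnR : (0:ℝ) < (n:ℝ) := by
      have : 1 ≤ n := le_trans hT₀ hn
      exact_mod_cast Nat.lt_of_lt_of_le Nat.zero_lt_one this
    have hn1R : (0:ℝ) < (n:ℝ) + 1 := by linarith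
    -- Bernoulli step: (n+1)^α ≥ n^α + α * n^(α-1)
    have hbern : (n:ℝ) ^ α + α * (n:ℝ) ^ (α - 1) ≤ ((n:ℝ) + 1) ^ α := by
      have hb := bernoulli_neg (s := 1 / (n:ℝ)) (by positivity) hαle
      have hmul := mul_le_mul_of_nonneg_right hb
        (le_of_lt (Real.rpow_pos_of_pos hnR α))
      have e1 : (1 + 1 / (n:ℝ)) ^ α * (n:ℝ) ^ α = ((n:ℝ) + 1) ^ α := by
        rw [← Real.mul_rpow (by positivity) hnR.le]
        congr 1; field_simp
      have e2 : (1 + α * (1 / (n:ℝ))) * (n:ℝ) ^ α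
          = (n:ℝ) ^ α + α * (n:ℝ) ^ (α - 1) := by
        rw [Real.rpow_sub hnR, Real.rpow_one]
        field_simp
      rw [e1, e2] at hmul
      exact hmul
    set B : ℝ := C₀ * ((n:ℝ) + 1) ^ α with hBdef
    have hBpos : 0 < B := mul_pos hC₀ (Real.rpow_pos_of_pos hn1R α)
    have hBpow : η * B ^ (2 * θ) = η * C₀ ^ (2 * θ) * ((n:ℝ) + 1) ^ (2 * θ / (1 - 2 * θ)) := by
      rw [hBdef, Real.mul_rpow hC₀.le (le_of_lt (Real.rpow_pos_of_pos hn1R α)),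
        ← Real.rpow_mul hn1R.le, hα2]
      ring
    have hchain : y (n+1) + η * (y (n+1)) ^ (2 * θ) ≤ B + η * B ^ (2 * θ) := by
      have h1 : y (n+1) + η * (y (n+1)) ^ (2 * θ) ≤ y n + w n := by
        have := hrec n hn; linarith
      have h2 : y n ≤ C₀ * (n:ℝ) ^ α := ih
      have h3 : C₀ * (n:ℝ) ^ α ≤ B + (C₀ / (2 * θ - 1)) * (n:ℝ) ^ (α - 1) := by
        have h := mul_le_mul_of_nonneg_left hbern hC₀.le
        rw [hBdef, hnegα]
        nlinarith [h]
      have h4 := hcond n hn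
      rw [← hBpow, ← hα1] at h4
      linarith
    -- monotonicity of z ↦ z + η z^(2θ)
    have hfinal : y (n+1) ≤ B := by
      by_contra h
      push_neg at h
      have hpow : B ^ (2 * θ) ≤ (y (n+1)) ^ (2 * θ) :=
        Real.rpow_le_rpow hBpos.le h.le (by linarith)
      have := mul_le_mul_of_nonneg_left hpow hη.le
      linarith
    have hcast : ((n+1 : ℕ) : ℝ) = (n:ℝ) + 1 := by push_cast; ring
    rw [hcast]
    exact hfinal
end

section
/- Let f : ℝ^n → ℝ be L-smooth, bounded below, and satisfy the Łojasiewicz inequality at each critical point with exponent θ ∈ (0,1). Let x_{t+1} = x_t - η∇f(x_t) with constant step size η ∈ (0, 2/L), and assume the sequence (x_t) is bounded and converges to a critical point x_∞ with x_t eventually within the Łojasiewicz neighborhood of x_∞ and f(x_t) - f(x_∞) ∈ (0, (1/(2θ(η - Lη²/2)))^{1/(2θ-1)}) eventually. If θ ∈ (1/2, 1), then f(x_t) - f(x_∞) ≤ C₀·t^{1/(1-2θ)} for all sufficiently large t and suitable C₀ with 1/(2θ-1) ≤ C₀^{2θ-1}·(η - Lη²/2). -/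
open Filter InnerProductSpace

section Aux
variable {n : ℕ}
local notation "F" => EuclideanSpace ℝ (Fin n)

lemma grad_inner' (f : F → ℝ) (x v : F) :
    ⟪gradient f x, v⟫_ℝ = fderiv ℝ f x v := by
  rw [gradient, toDual_symm_apply]

lemma fderiv_lip' (f : F → ℝ) (L : ℝ)
    (hlip : ∀ x x' : F, ‖gradient f x - gradient f x'‖ ≤ L * ‖x - x'‖)
    (a b : F) : ‖fderiv ℝ f a - fderiv ℝ f b‖ ≤ L * ‖a - b‖ := by
  have : fderiv ℝ f a - fderiv ℝ f b
      = toDual ℝ F (gradient f a - gradient f b) := by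
    simp [gradient, map_sub]
  rw [this, (toDual ℝ F).norm_map]
  exact hlip a b

lemma descent' (f : F → ℝ) (L : ℝ) (hdiff : ContDiff ℝ 1 f)
    (hlip : ∀ x x' : F, ‖gradient f x - gradient f x'‖ ≤ L * ‖x - x'‖)
    (x y : F) : f y ≤ f x + ⟪gradient f x, y - x⟫_ℝ + L / 2 * ‖y - x‖ ^ 2 := by
  have hd : Differentiable ℝ f := hdiff.differentiable one_ne_zero
  set v := y - x with hv
  set g' : ℝ → ℝ := fun s => fderiv ℝ f (x + s • v) v with hg'
  have hder : ∀ s : ℝ, HasDerivAt (fun s : ℝ => f (x + s • v)) (g' s) s := by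
    intro s
    have h1 : HasDerivAt (fun s : ℝ => x + s • v) v s := by
      simpa using ((hasDerivAt_id s).smul_const v).const_add x
    exact (hd (x + s • v)).hasFDerivAt.comp_hasDerivAt s h1
  have hcont : Continuous g' := by
    have := (hdiff.continuous_fderiv one_ne_zero)
    exact ((this.comp (continuous_const.add (continuous_id.smul continuous_const)))).clm_apply continuous_const
  have hint : ∫ s in (0:ℝ)..1, g' s = f (x + (1:ℝ) • v) - f (x + (0:ℝ) • v) :=
    intervalIntegral.integral_eq_sub_of_hasDerivAt (fun s _ => hder s)
      (hcont.intervalIntegrable 0 1)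
  have hbnd : ∀ s ∈ Set.Icc (0:ℝ) 1, g' s - g' 0 ≤ L * s * ‖v‖ ^ 2 := by
    intro s hs
    have h0 : g' s - g' 0 = (fderiv ℝ f (x + s • v) - fderiv ℝ f (x + (0:ℝ) • v)) v := by
      simp [hg']
    rw [h0]
    calc (fderiv ℝ f (x + s • v) - fderiv ℝ f (x + (0:ℝ) • v)) v
        ≤ ‖(fderiv ℝ f (x + s • v) - fderiv ℝ f (x + (0:ℝ) • v)) v‖ := le_abs_self _
      _ ≤ ‖fderiv ℝ f (x + s • v) - fderiv ℝ f (x + (0:ℝ) • v)‖ * ‖v‖ :=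
          ContinuousLinearMap.le_opNorm _ _
      _ ≤ (L * ‖(x + s • v) - (x + (0:ℝ) • v)‖) * ‖v‖ := by
          gcongr; exact fderiv_lip' f L hlip _ _
      _ = L * s * ‖v‖ ^ 2 := by
          simp [norm_smul, abs_of_nonneg hs.1, sq]; ring
  have key : f y - f x - g' 0 ≤ L / 2 * ‖v‖ ^ 2 := by
    have h1 : f y - f x = ∫ s in (0:ℝ)..1, g' s := by rw [hint]; simp [hv]
    have h2 : ∫ s in (0:ℝ)..1, g' 0 = g' 0 := by simp
    have h3 : ∫ s in (0:ℝ)..1, (g' s - g' 0) ≤ ∫ s in (0:ℝ)..1, L * s * ‖v‖ ^ 2 :=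
      intervalIntegral.integral_mono_on zero_le_one
        ((hcont.sub continuous_const).intervalIntegrable 0 1)
        (((continuous_const.mul continuous_id).mul continuous_const).intervalIntegrable 0 1)
        hbnd
    have h4 : ∫ s in (0:ℝ)..1, L * s * ‖v‖ ^ 2 = L / 2 * ‖v‖ ^ 2 := by
      have he : ∀ s : ℝ, L * s * ‖v‖ ^ 2 = s * (L * ‖v‖ ^ 2) := fun s => by ring
      simp only [he]
      rw [intervalIntegral.integral_mul_const, integral_id]; ring
    have h5 : ∫ s in (0:ℝ)..1, (g' s - g' 0) = (∫ s in (0:ℝ)..1, g' s) - g' 0 := by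
      rw [intervalIntegral.integral_sub (hcont.intervalIntegrable 0 1)
        (intervalIntegrable_const), h2]
    rw [h1]; linarith [h5 ▸ h3, h4 ▸ h3]
  have hg0 : g' 0 = ⟪gradient f x, v⟫_ℝ := by rw [grad_inner']; simp [hg']
  linarith [hg0 ▸ key]

end Aux

lemma rpow_step' (β t : ℝ) (hβ : 0 < β) (ht : 1 ≤ t) :
    t ^ (-β) - (t+1) ^ (-β) ≤ β * t ^ (-(β+1)) := by
  have ht0 : (0:ℝ) < t := lt_of_lt_of_le one_pos ht
  obtain ⟨c, hc, hc'⟩ := exists_hasDerivAt_eq_slope (fun u : ℝ => u ^ (-β))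
    (fun u => -β * u ^ (-β - 1)) (by linarith : t < t + 1)
    (by
      apply ContinuousOn.rpow_const continuousOn_id
      intro u hu
      exact Or.inl (show (id u : ℝ) ≠ 0 from ne_of_gt (by simp only [id]; linarith [hu.1])))
    (by
      intro u hu
      exact Real.hasDerivAt_rpow_const (Or.inl (ne_of_gt (by linarith [hu.1]))))
  have hct : t < c := hc.1
  have h1 : (t+1) ^ (-β) - t ^ (-β) = -β * c ^ (-β - 1) := by
    rw [hc']; field_simp; ring
  have hle : c ^ (-β - 1) ≤ t ^ (-β - 1) :=
    Real.rpow_le_rpow_of_nonpos ht0 hct.le (by linarith)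
  have h2 : t ^ (-β) - (t+1) ^ (-β) = β * c ^ (-β-1) := by linarith
  rw [h2, show -(β+1) = -β - 1 by ring]
  exact mul_le_mul_of_nonneg_left hle hβ.le

theorem stmt_19 (n : ℕ) (f : EuclideanSpace ℝ (Fin n) → ℝ) (L η θ : ℝ)
    (hL : 0 < L) (hη : η ∈ Set.Ioo (0 : ℝ) (2 / L))
    (hθ : θ ∈ Set.Ioo (1/2 : ℝ) 1)
    (hdiff : ContDiff ℝ 1 f)
    (hlip : ∀ x x' : EuclideanSpace ℝ (Fin n),
      ‖gradient f x - gradient f x'‖ ≤ L * ‖x - x'‖)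
    (hbdd : BddBelow (Set.range f))
    (hloj : ∀ xstar : EuclideanSpace ℝ (Fin n), gradient f xstar = 0 →
      ∃ μ > (0 : ℝ), ∀ x, ‖x - xstar‖ ≤ μ →
        |f x - f xstar| ^ θ ≤ ‖gradient f x‖)
    (x : ℕ → EuclideanSpace ℝ (Fin n))
    (hrec : ∀ t, x (t+1) = x t - η • gradient f (x t))
    (hbound : ∃ R : ℝ, ∀ t, ‖x t‖ ≤ R)
    (xlim : EuclideanSpace ℝ (Fin n))
    (hconv : Tendsto x atTop (nhds xlim))
    (hcrit : gradient f xlim = 0)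
    (hnbhd : ∃ μ > (0 : ℝ),
      (∀ x', ‖x' - xlim‖ ≤ μ → |f x' - f xlim| ^ θ ≤ ‖gradient f x'‖) ∧
      ∀ᶠ t in atTop, ‖x t - xlim‖ ≤ μ)
    (hgap : ∀ᶠ t in atTop, f (x t) - f xlim ∈
      Set.Ioo (0 : ℝ) ((1 / (2 * θ * (η - L * η ^ 2 / 2))) ^ (1 / (2 * θ - 1)))) :
    ∃ C₀ > (0 : ℝ), 1 / (2 * θ - 1) ≤ C₀ ^ (2 * θ - 1) * (η - L * η ^ 2 / 2) ∧
      ∃ T₁ : ℕ, ∀ t ≥ T₁, f (x t) - f xlim ≤ C₀ * (t : ℝ) ^ (1 / (1 - 2 * θ)) := by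
  obtain ⟨hη0, hη2⟩ := hη
  obtain ⟨hθ1, hθ2⟩ := hθ
  set c : ℝ := η - L * η ^ 2 / 2 with hc_def
  have hηL : η * L < 2 := by
    rw [lt_div_iff₀ hL] at hη2; linarith
  have hc : 0 < c := by
    have : c = η * (2 - η * L) / 2 := by rw [hc_def]; ring
    rw [this]
    exact div_pos (mul_pos hη0 (by linarith)) two_pos
  set β : ℝ := 1 / (2 * θ - 1) with hβ_def
  have h2θ1 : 0 < 2 * θ - 1 := by linarith
  have hβ : 0 < β := one_div_pos.mpr h2θ1
  have hβeq : β * (2 * θ - 1) = 1 := by rw [hβ_def]; field_simp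
  have h2θβ : 2 * θ * β = β + 1 := by
    rw [hβ_def]; field_simp; try ring
  -- error sequence
  set e : ℕ → ℝ := fun t => f (x t) - f xlim with he_def
  obtain ⟨μ, hμ, hloc, hev⟩ := hnbhd
  obtain ⟨T₂, hT₂⟩ := eventually_atTop.mp (hev.and hgap)
  set T₁ : ℕ := max T₂ 1 with hT₁_def
  have hT₁1 : 1 ≤ T₁ := le_max_right _ _
  -- the key one-step recurrence
  have hstep : ∀ t : ℕ, T₁ ≤ t → 0 < e t ∧ e (t+1) ≤ e t - c * e t ^ (2*θ) := by
    intro t ht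
    obtain ⟨hball, hgap1, _⟩ := hT₂ t (le_trans (le_max_left _ _) ht)
    refine ⟨hgap1, ?_⟩
    set g := gradient f (x t) with hg_def
    have hdesc := descent' (n := n) f L hdiff hlip (x t) (x (t+1))
    have hxd : x (t+1) - x t = -(η • g) := by rw [hrec t]; abel
    have hin : ⟪g, x (t+1) - x t⟫_ℝ = -(η * ‖g‖^2) := by
      rw [hxd, inner_neg_right, real_inner_smul_right, real_inner_self_eq_norm_sq]
    have hnrm : ‖x (t+1) - x t‖^2 = η^2 * ‖g‖^2 := by
      rw [hxd, norm_neg, norm_smul, Real.norm_eq_abs, abs_of_pos hη0, mul_pow]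
    have hd2 : f (x (t+1)) ≤ f (x t) - c * ‖g‖^2 := by
      rw [hin, hnrm] at hdesc
      calc f (x (t+1)) ≤ f (x t) + -(η * ‖g‖^2) + L/2 * (η^2 * ‖g‖^2) := hdesc
        _ = f (x t) - c * ‖g‖^2 := by rw [hc_def]; ring
    -- Lojasiewicz
    have hloj1 : e t ^ θ ≤ ‖g‖ := by
      have := hloc (x t) hball
      rwa [abs_of_pos hgap1] at this
    have hpow : e t ^ (2*θ) ≤ ‖g‖^2 := by
      have h1 : e t ^ (2*θ) = (e t ^ θ)^2 := by
        rw [show (2*θ) = θ*2 by ring, Real.rpow_mul hgap1.le, Real.rpow_two]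
      rw [h1]
      exact pow_le_pow_left₀ (Real.rpow_nonneg hgap1.le θ) hloj1 2
    have : c * e t ^ (2*θ) ≤ c * ‖g‖^2 := mul_le_mul_of_nonneg_left hpow hc.le
    simp only [he_def]
    linarith
  -- choose C₀
  set D : ℝ := β * (2:ℝ) ^ (2*θ*β) / c with hD_def
  have hD : 0 < D := by positivity
  set A : ℝ := D ^ β with hA_def
  have hA : 0 < A := Real.rpow_pos_of_pos hD β
  set C₀ : ℝ := max A (e T₁ * (T₁:ℝ) ^ β) with hC₀_def
  have hC₀A : A ≤ C₀ := le_max_left _ _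
  have hC₀ : 0 < C₀ := lt_of_lt_of_le hA hC₀A
  have hT₁R : (1:ℝ) ≤ (T₁:ℝ) := by exact_mod_cast hT₁1
  -- main coefficient inequality
  have hcoef : D ≤ C₀ ^ (2*θ-1) := by
    calc D = (D ^ β) ^ (2*θ-1) := by
          rw [← Real.rpow_mul hD.le, hβeq, Real.rpow_one]
      _ ≤ C₀ ^ (2*θ-1) := Real.rpow_le_rpow hA.le hC₀A h2θ1.le
  have hcoef2 : β * (2:ℝ) ^ (2*θ*β) ≤ C₀ ^ (2*θ-1) * c := by
    have := mul_le_mul_of_nonneg_right hcoef hc.le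
    rw [hD_def] at this
    calc β * (2:ℝ) ^ (2*θ*β) = β * (2:ℝ) ^ (2*θ*β) / c * c := by field_simp
      _ ≤ C₀ ^ (2*θ-1) * c := this
  refine ⟨C₀, hC₀, ?_, T₁, ?_⟩
  · -- 1/(2θ-1) ≤ C₀^(2θ-1) * c
    have h2p : (1:ℝ) ≤ (2:ℝ) ^ (2*θ*β) := by
      rw [show (1:ℝ) = (2:ℝ) ^ (0:ℝ) by simp]
      exact Real.rpow_le_rpow_of_exponent_le one_le_two (by positivity)
    calc (1:ℝ)/(2*θ-1) = β := rfl
      _ ≤ β * (2:ℝ) ^ (2*θ*β) := le_mul_of_one_le_right hβ.le h2p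
      _ ≤ C₀ ^ (2*θ-1) * c := hcoef2
  · -- the decay bound
    have hexp : 1/(1-2*θ) = -β := by
      rw [hβ_def, show (1-2*θ) = -(2*θ-1) by ring, div_neg]
    intro t ht
    rw [hexp]
    show e t ≤ C₀ * (t:ℝ) ^ (-β)
    induction t, ht using Nat.le_induction with
    | base =>
      have : e T₁ * (T₁:ℝ) ^ β ≤ C₀ := le_max_right _ _
      calc e T₁ = e T₁ * (T₁:ℝ) ^ β * (T₁:ℝ) ^ (-β) := by
            rw [mul_assoc, ← Real.rpow_add (by linarith : (0:ℝ) < (T₁:ℝ))]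
            simp
        _ ≤ C₀ * (T₁:ℝ) ^ (-β) := by
            apply mul_le_mul_of_nonneg_right this
            positivity
    | succ t ht ih =>
      have htR : (1:ℝ) ≤ (t:ℝ) := le_trans hT₁R (by exact_mod_cast ht)
      have ht0 : (0:ℝ) < (t:ℝ) := by linarith
      have ht10 : (0:ℝ) < (t:ℝ) + 1 := by linarith
      obtain ⟨het, hrec1⟩ := hstep t ht
      have hcast : ((t+1 : ℕ):ℝ) = (t:ℝ) + 1 := by push_cast; ring
      rw [hcast]
      by_cases hcase : e t ≤ C₀ * ((t:ℝ)+1) ^ (-β)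
      · have : 0 ≤ c * e t ^ (2*θ) := by positivity
        linarith
      · push_neg at hcase
        have hC1 : 0 < C₀ * ((t:ℝ)+1) ^ (-β) := by positivity
        -- e t ^ (2θ) ≥ (C₀ (t+1)^{-β})^{2θ}
        have hp1 : (C₀ * ((t:ℝ)+1) ^ (-β)) ^ (2*θ) ≤ e t ^ (2*θ) :=
          Real.rpow_le_rpow hC1.le hcase.le (by positivity)
        have hp2 : (C₀ * ((t:ℝ)+1) ^ (-β)) ^ (2*θ)
            = C₀ ^ (2*θ) * ((t:ℝ)+1) ^ (-(2*θ*β)) := by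
          rw [Real.mul_rpow hC₀.le (by positivity),
            ← Real.rpow_mul (by positivity : (0:ℝ) ≤ (t:ℝ)+1)]
          ring_nf
        -- step inequality for rpow
        have hstep2 : (t:ℝ) ^ (-β) - ((t:ℝ)+1) ^ (-β) ≤ β * (t:ℝ) ^ (-(β+1)) :=
          rpow_step' β (t:ℝ) hβ htR
        -- (t:ℝ)^{-(β+1)} ≤ 2^{β+1} (t+1)^{-(β+1)}
        have hcomp : (t:ℝ) ^ (-(β+1)) ≤ (2:ℝ)^(β+1) * ((t:ℝ)+1) ^ (-(β+1)) := by
          have hq : ((t:ℝ)+1) ^ (β+1) ≤ (2:ℝ)^(β+1) * (t:ℝ) ^ (β+1) := by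
            rw [← Real.mul_rpow (by norm_num) ht0.le]
            exact Real.rpow_le_rpow ht10.le (by linarith) (by positivity)
          rw [Real.rpow_neg ht0.le, Real.rpow_neg ht10.le,
            inv_eq_one_div, show (2:ℝ)^(β+1) * (((t:ℝ)+1) ^ (β+1))⁻¹
              = (2:ℝ)^(β+1) / (((t:ℝ)+1) ^ (β+1)) by rw [div_eq_mul_inv],
            div_le_div_iff₀ (by positivity) (by positivity)]
          linarith [hq]
        -- combine
        have hCpow : C₀ ^ (2*θ) = C₀ ^ (2*θ-1) * C₀ := by
          rw [show (2*θ) = (2*θ-1) + 1 by ring, Real.rpow_add hC₀, Real.rpow_one]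
          ring_nf
        have hmain : C₀ * ((t:ℝ) ^ (-β) - ((t:ℝ)+1) ^ (-β))
            ≤ c * (C₀ ^ (2*θ) * ((t:ℝ)+1) ^ (-(2*θ*β))) := by
          have h1 : C₀ * ((t:ℝ) ^ (-β) - ((t:ℝ)+1) ^ (-β))
              ≤ C₀ * (β * (t:ℝ) ^ (-(β+1))) :=
            mul_le_mul_of_nonneg_left hstep2 hC₀.le
          have h2 : C₀ * (β * (t:ℝ) ^ (-(β+1)))
              ≤ C₀ * (β * ((2:ℝ)^(β+1) * ((t:ℝ)+1) ^ (-(β+1)))) := by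
            apply mul_le_mul_of_nonneg_left _ hC₀.le
            exact mul_le_mul_of_nonneg_left hcomp hβ.le
          have h3 : C₀ * (β * ((2:ℝ)^(β+1) * ((t:ℝ)+1) ^ (-(β+1))))
              ≤ c * (C₀ ^ (2*θ) * ((t:ℝ)+1) ^ (-(2*θ*β))) := by
            rw [hCpow, h2θβ]
            have h4 : β * (2:ℝ)^(β+1) ≤ C₀ ^ (2*θ-1) * c := by
              rw [← h2θβ] at *; exact hcoef2
            calc C₀ * (β * ((2:ℝ)^(β+1) * ((t:ℝ)+1) ^ (-(β+1))))
                = (β * (2:ℝ)^(β+1)) * (C₀ * ((t:ℝ)+1) ^ (-(β+1))) := by ring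
              _ ≤ (C₀ ^ (2*θ-1) * c) * (C₀ * ((t:ℝ)+1) ^ (-(β+1))) := by
                  apply mul_le_mul_of_nonneg_right h4; positivity
              _ = c * (C₀ ^ (2*θ-1) * C₀ * ((t:ℝ)+1) ^ (-(β+1))) := by ring
          linarith
        have hfinal : e (t+1) ≤ e t - c * (C₀ ^ (2*θ) * ((t:ℝ)+1) ^ (-(2*θ*β))) := by
          have := mul_le_mul_of_nonneg_left (hp2 ▸ hp1) hc.le
          linarith
        linarith [ih]
end
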